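/- For positive reals a ≠ b, lim_{t→0⁺} L_t(a,b) = a and lim_{t→1⁻} L_t(a,b) = b, where L_t(a,b) = (1/(log a − log b))·((1−t)/t · a^(1-t)(a^t − b^t) + t/(1−t) · b^t(a^(1-t) − b^(1-t))). -/

import Mathlib

open Set Filter Topology

private lemma wlm_lim0 (a b : ℝ) (ha : 0 < a) (hb : 0 < b) (hab : a ≠ b) :
    Tendsto (fun t : ℝ =>
        (1 / (Real.log a - Real.log b)) *
          ((1 - t) / t * (a ^ (1 - t) * (a ^ t - b ^ t)) +
            t / (1 - t) * (b ^ t * (a ^ (1 - t) - b ^ (1 - t)))))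
      (𝓝[>] (0:ℝ)) (𝓝 a) := by
  have hL : Real.log a - Real.log b ≠ 0 := by
    intro h
    exact hab (Real.log_injOn_pos (Set.mem_Ioi.2 ha) (Set.mem_Ioi.2 hb) (by linarith))
  -- slope limit
  have hd : HasDerivAt (fun t : ℝ => a ^ t - b ^ t) (Real.log a - Real.log b) 0 := by
    have h1 := (Real.hasStrictDerivAt_const_rpow ha 0).hasDerivAt
    have h2 := (Real.hasStrictDerivAt_const_rpow hb 0).hasDerivAt
    have h3 := h1.sub h2
    simp only [Real.rpow_zero, one_mul] at h3
    exact h3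
  rw [hasDerivAt_iff_tendsto_slope] at hd
  have hslope : Tendsto (fun t : ℝ => (a ^ t - b ^ t) / t) (𝓝[>] (0:ℝ))
      (𝓝 (Real.log a - Real.log b)) := by
    have := hd.mono_left (nhdsWithin_mono _ (fun x hx => ne_of_gt hx : Ioi (0:ℝ) ⊆ {0}ᶜ))
    refine this.congr (fun t => ?_)
    simp [slope_def_field, div_eq_div_iff]
  -- term 1
  have hcont1 : Tendsto (fun t : ℝ => (1 - t) * a ^ (1 - t)) (𝓝[>] (0:ℝ)) (𝓝 a) := by
    have : ContinuousAt (fun t : ℝ => (1 - t) * a ^ (1 - t)) 0 := by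
      exact (continuousAt_const.sub continuousAt_id).mul
        ((Real.continuousAt_const_rpow (ne_of_gt ha)).comp
          (continuousAt_const.sub continuousAt_id))
    have h0 : ((1:ℝ) - 0) * a ^ ((1:ℝ) - 0) = a := by simp
    simpa [h0] using this.tendsto.mono_left nhdsWithin_le_nhds
  have hterm1 : Tendsto (fun t : ℝ => (1 - t) * a ^ (1 - t) * ((a ^ t - b ^ t) / t))
      (𝓝[>] (0:ℝ)) (𝓝 (a * (Real.log a - Real.log b))) := hcont1.mul hslope
  -- term 2
  have hterm2 : Tendsto (fun t : ℝ => t / (1 - t) * (b ^ t * (a ^ (1 - t) - b ^ (1 - t))))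
      (𝓝[>] (0:ℝ)) (𝓝 0) := by
    have : ContinuousAt (fun t : ℝ => t / (1 - t) * (b ^ t * (a ^ (1 - t) - b ^ (1 - t)))) 0 := by
      refine (continuousAt_id.div (continuousAt_const.sub continuousAt_id) (by norm_num)).mul
        (ContinuousAt.mul (Real.continuousAt_const_rpow (ne_of_gt hb)) ?_)
      exact ((Real.continuousAt_const_rpow (ne_of_gt ha)).comp
          (continuousAt_const.sub continuousAt_id)).sub
        ((Real.continuousAt_const_rpow (ne_of_gt hb)).comp
          (continuousAt_const.sub continuousAt_id))
    have h0 : (0:ℝ) / (1 - 0) * (b ^ (0:ℝ) * (a ^ ((1:ℝ) - 0) - b ^ ((1:ℝ) - 0))) = 0 := by simp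
    simpa [h0] using this.tendsto.mono_left nhdsWithin_le_nhds
  have hsum := (hterm1.add hterm2).const_mul (1 / (Real.log a - Real.log b))
  have hval : 1 / (Real.log a - Real.log b) * (a * (Real.log a - Real.log b) + 0) = a := by
    field_simp
    ring
  rw [hval] at hsum
  refine hsum.congr' ?_
  filter_upwards [self_mem_nhdsWithin] with t ht
  have ht0 : (t:ℝ) ≠ 0 := ne_of_gt ht
  field_simp

theorem weighted_log_mean_limits (a b : ℝ) (ha : 0 < a) (hb : 0 < b) (hab : a ≠ b) :
    Tendsto (fun t : ℝ =>
        (1 / (Real.log a - Real.log b)) *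
          ((1 - t) / t * (a ^ (1 - t) * (a ^ t - b ^ t)) +
            t / (1 - t) * (b ^ t * (a ^ (1 - t) - b ^ (1 - t)))))
      (𝓝[>] (0:ℝ)) (𝓝 a) ∧
    Tendsto (fun t : ℝ =>
        (1 / (Real.log a - Real.log b)) *
          ((1 - t) / t * (a ^ (1 - t) * (a ^ t - b ^ t)) +
            t / (1 - t) * (b ^ t * (a ^ (1 - t) - b ^ (1 - t)))))
      (𝓝[<] (1:ℝ)) (𝓝 b) := by
  refine ⟨wlm_lim0 a b ha hb hab, ?_⟩
  have hL : Real.log a - Real.log b ≠ 0 := by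
    intro h
    exact hab (Real.log_injOn_pos (Set.mem_Ioi.2 ha) (Set.mem_Ioi.2 hb) (by linarith))
  have hmap : Tendsto (fun t : ℝ => 1 - t) (𝓝[<] (1:ℝ)) (𝓝[>] (0:ℝ)) := by
    apply tendsto_nhdsWithin_of_tendsto_nhds_of_eventually_within
    · have : Tendsto (fun t : ℝ => 1 - t) (𝓝 1) (𝓝 (1 - 1)) :=
        (continuousAt_const.sub continuousAt_id).tendsto
      simpa using this.mono_left nhdsWithin_le_nhds
    · filter_upwards [self_mem_nhdsWithin] with t ht
      simpa [Set.mem_Ioi] using ht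
  have hcomp := (wlm_lim0 b a hb ha hab.symm).comp hmap
  refine hcomp.congr (fun t => ?_)
  simp only [Function.comp]
  rw [show (1:ℝ) - (1 - t) = t from by ring,
    show Real.log b - Real.log a = -(Real.log a - Real.log b) from by ring, div_neg]
  ring
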